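/- In the Gaudin realization, the global Cartan generator acts on Bethe vectors by h_gl Ψ_M(μ) = −2(p + M) Ψ_M(μ) + 2ξ(p + M − 1) ∑_{i=1}^{M} Ψ_{M−1}(μ^(i)), where p = −(1/2)∑_{a=1}^{N} ℓ_a, Ψ_M(μ) = B_M(μ)Ω₊, and μ^(i) is the set μ with μᵢ removed. In particular, for ξ ≠ 0 and M ≥ 1 the Bethe vectors are in general not eigenvectors of h_gl. -/

import Mathlib

open Finset

/-- The operators B^(k)_M(μ₁,…,μ_M) = ∏_{n=k}^{M+k−1} (X⁻(μ_{n−k+1}) + nξ),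
    as an ordered product (left to right), B^(k)_0 = 1. -/
noncomputable def Bop {A : Type*} [Ring A] [Module ℂ A]
    (Xm : ℂ → A) (ξ : ℂ) : ℕ → List ℂ → A
  | _, [] => 1
  | k, μ :: t => (Xm μ + ((k : ℂ) * ξ) • (1 : A)) * Bop Xm ξ (k + 1) t

/-- the argument tuple μ with the i-th entry removed (in increasing index order) -/
noncomputable def rmv {M : ℕ} (μ : Fin M → ℂ) (i : Fin M) : List ℂ :=
  ((Finset.univ.erase i).sort (· ≤ ·)).map μ

/-- the twisted Gaudin loop generator X⁻(λ) = ∑_a (X⁻_a/(λ−z_a) − (ξ/2)h_a) -/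
noncomputable def XmGaudin {H : Type*} [AddCommGroup H] [Module ℂ H] {N : ℕ}
    (z : Fin N → ℂ) (ξ : ℂ) (XmA hA : Fin N → Module.End ℂ H) (lam : ℂ) :
    Module.End ℂ H :=
  ∑ a, ((lam - z a)⁻¹ • XmA a - (ξ / 2) • hA a)

lemma ofFn_succAbove_eq_eraseIdx : ∀ {n : ℕ} (ν : Fin (n+1) → ℂ) (i : Fin (n+1)),
    List.ofFn (ν ∘ i.succAbove) = (List.ofFn ν).eraseIdx i := by
  intro n
  induction n with
  | zero =>
    intro ν i
    have : i = 0 := Fin.eq_zero i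
    subst this
    simp
  | succ n ih =>
    intro ν i
    rcases Fin.eq_zero_or_eq_succ i with h0 | ⟨j, rfl⟩
    · subst h0
      rw [List.ofFn_succ (f := ν ∘ Fin.succAbove 0), List.ofFn_succ (f := ν)]
      simp [Fin.succAbove_zero, List.eraseIdx]
    · rw [List.ofFn_succ (f := ν ∘ j.succ.succAbove), List.ofFn_succ (f := ν)]
      have hcomp : (fun l : Fin n => (ν ∘ j.succ.succAbove) l.succ)
          = (fun l : Fin (n+1) => ν l.succ) ∘ j.succAbove := by
        funext l; simp [Fin.succ_succAbove_succ]
      rw [hcomp, ih (fun l => ν l.succ) j]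
      have h0 : (ν ∘ j.succ.succAbove) 0 = ν 0 := by simp [Fin.succ_succAbove_zero]
      rw [h0, show ((j.succ : Fin (n+2)) : ℕ) = (j : ℕ) + 1 from rfl,
        List.eraseIdx_cons_succ]

lemma rmv_eq {n : ℕ} (μ : Fin (n+1) → ℂ) (i : Fin (n+1)) :
    rmv μ i = (List.ofFn μ).eraseIdx i := by
  rw [← ofFn_succAbove_eq_eraseIdx]
  have hl : ((Finset.univ.erase i).sort (· ≤ ·)) = List.ofFn i.succAbove := by
    refine (fun hp h1 h2 => List.Perm.eq_of_pairwise' (r := (· ≤ ·)) h1 h2 hp) ?_ ?_ ?_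
    · apply List.perm_of_nodup_nodup_toFinset_eq (Finset.sort_nodup _ _)
        (List.nodup_ofFn.2 (Fin.succAbove_right_injective))
      rw [Finset.sort_toFinset]
      ext x
      simp [List.mem_ofFn, Fin.exists_succAbove_eq_iff, Set.mem_range]
    · exact Finset.pairwise_sort _ _
    · exact List.pairwise_ofFn.2 fun a b h => ((Fin.strictMono_succAbove i) h).le
  rw [rmv, hl, List.map_ofFn]

/-- shift lemma: B^{(k+1)}(t) = B^{(k)}(t) + ξ ∑_i B^{(k+1)}(t^{(i)}) -/
lemma Bop_shift {H : Type*} [AddCommGroup H] [Module ℂ H]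
    (Xm : ℂ → Module.End ℂ H) (ξ : ℂ) :
    ∀ (t : List ℂ) (k : ℕ),
      Bop Xm ξ (k+1) t =
        Bop Xm ξ k t + ξ • ∑ i : Fin t.length, Bop Xm ξ (k+1) (t.eraseIdx i) := by
  intro t
  induction t with
  | nil => intro k; simp [Bop]
  | cons μ s ih =>
    intro k
    show Bop Xm ξ (k+1) (μ :: s) = Bop Xm ξ k (μ :: s)
      + ξ • ∑ i : Fin (s.length + 1), Bop Xm ξ (k+1) ((μ :: s).eraseIdx i)
    rw [Fin.sum_univ_succ]
    simp only [Fin.val_zero, List.eraseIdx_cons_zero, Fin.val_succ, List.eraseIdx_cons_succ]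
    simp only [Bop]
    rw [ih (k+1), ih k]
    push_cast
    simp only [Finset.mul_sum, Finset.smul_sum, mul_add, add_mul, smul_mul_assoc,
      one_mul, mul_smul_comm, smul_add, smul_smul, add_smul, Finset.sum_add_distrib]
    abel

section Main

variable {H : Type*} [AddCommGroup H] [Module ℂ H]
    {N : ℕ} (z ℓ : Fin N → ℂ) (ξ : ℂ) (hA XmA : Fin N → Module.End ℂ H)

lemma hgl_comm
    (hhXm : ∀ a b, hA a * XmA b - XmA b * hA a = if a = b then (-2 : ℂ) • XmA a else 0)
    (lam : ℂ) :
    (∑ a, hA a) * XmGaudin z ξ XmA hA lam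
      = XmGaudin z ξ XmA hA lam * (∑ a, hA a)
        + (-2 : ℂ) • XmGaudin z ξ XmA hA lam + (-ξ) • (∑ a, hA a) := by
  have hXm' : ∀ b, (∑ a, hA a) * XmA b = XmA b * (∑ a, hA a) + (-2 : ℂ) • XmA b := by
    intro b
    have h1 : (∑ a, hA a) * XmA b - XmA b * (∑ a, hA a) = (-2 : ℂ) • XmA b := by
      rw [Finset.sum_mul, Finset.mul_sum, ← Finset.sum_sub_distrib,
        Finset.sum_congr rfl (fun a _ => hhXm a b)]
      simp
    have h2 := sub_eq_iff_eq_add.mp h1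
    rw [h2, add_comm]
  have hS : (∑ a, hA a) * (∑ b, (lam - z b)⁻¹ • XmA b)
      = (∑ b, (lam - z b)⁻¹ • XmA b) * (∑ a, hA a)
        + (-2 : ℂ) • ∑ b, (lam - z b)⁻¹ • XmA b := by
    rw [Finset.mul_sum, Finset.sum_mul, Finset.smul_sum, ← Finset.sum_add_distrib]
    apply Finset.sum_congr rfl
    intro b _
    rw [mul_smul_comm, hXm' b, smul_mul_assoc]
    module
  have hXg : XmGaudin z ξ XmA hA lam
      = (∑ b, (lam - z b)⁻¹ • XmA b) - (ξ / 2) • (∑ a, hA a) := by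
    rw [XmGaudin, Finset.sum_sub_distrib, ← Finset.smul_sum]
  rw [hXg, mul_sub, sub_mul, hS, mul_smul_comm, smul_mul_assoc]
  module

lemma key
    (hhXm : ∀ a b, hA a * XmA b - XmA b * hA a = if a = b then (-2 : ℂ) • XmA a else 0)
    (Ω : H) (hΩh : ∀ a, hA a Ω = ℓ a • Ω) :
    ∀ (t : List ℂ) (m k : ℕ), t.length = m →
      (∑ a, hA a) (Bop (XmGaudin z ξ XmA hA) ξ k t Ω) =
        (-2 * ((-(1 / 2) * ∑ a, ℓ a) + (m : ℂ))) • Bop (XmGaudin z ξ XmA hA) ξ k t Ω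
          + (2 * ξ * ((-(1 / 2) * ∑ a, ℓ a) + (k : ℂ) + (m : ℂ) - 1)) •
              ∑ i : Fin m, Bop (XmGaudin z ξ XmA hA) ξ k (t.eraseIdx i) Ω := by
  intro t
  induction t with
  | nil =>
    intro m k hm
    simp only [List.length_nil] at hm
    subst hm
    rw [show Finset.univ (α := Fin 0) = ∅ from rfl]
    simp only [Bop, Module.End.one_apply, Nat.cast_zero, Finset.sum_empty, smul_zero,
      add_zero]
    rw [LinearMap.sum_apply]
    simp only [hΩh]
    rw [← Finset.sum_smul]
    congr 1
    ring
  | cons μ s ih =>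
    intro m k hm
    simp only [List.length_cons] at hm
    subst hm
    have hsh : Bop (XmGaudin z ξ XmA hA) ξ (k + 1) s Ω
        = Bop (XmGaudin z ξ XmA hA) ξ k s Ω
          + ξ • ∑ j : Fin s.length, Bop (XmGaudin z ξ XmA hA) ξ (k + 1) (s.eraseIdx j) Ω := by
      have h := congrArg (fun f : Module.End ℂ H => f Ω) (Bop_shift (XmGaudin z ξ XmA hA) ξ s k)
      simpa [LinearMap.add_apply, LinearMap.smul_apply, LinearMap.sum_apply] using h
    have hih := ih s.length (k + 1) rfl
    have hco : ∀ v : H,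
        (∑ a, hA a) ((XmGaudin z ξ XmA hA μ + ((k : ℂ) * ξ) • (1 : Module.End ℂ H)) v)
          = (XmGaudin z ξ XmA hA μ + ((k : ℂ) * ξ) • (1 : Module.End ℂ H)) ((∑ a, hA a) v)
            + (-2 : ℂ) • ((XmGaudin z ξ XmA hA μ + ((k : ℂ) * ξ) • (1 : Module.End ℂ H)) v)
            + (2 * ((k : ℂ) * ξ)) • v + (-ξ) • ((∑ a, hA a) v) := by
      intro v
      have hop : (∑ a, hA a) * (XmGaudin z ξ XmA hA μ + ((k : ℂ) * ξ) • (1 : Module.End ℂ H))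
          = (XmGaudin z ξ XmA hA μ + ((k : ℂ) * ξ) • (1 : Module.End ℂ H)) * (∑ a, hA a)
            + (-2 : ℂ) • (XmGaudin z ξ XmA hA μ + ((k : ℂ) * ξ) • (1 : Module.End ℂ H))
            + (2 * ((k : ℂ) * ξ)) • (1 : Module.End ℂ H) + (-ξ) • (∑ a, hA a) := by
        rw [mul_add, add_mul, hgl_comm z ξ hA XmA hhXm μ, mul_smul_comm, smul_mul_assoc,
          mul_one, one_mul]
        module
      have h2 := congrArg (fun f : Module.End ℂ H => f v) hop
      simpa [Module.End.mul_apply, LinearMap.add_apply, LinearMap.smul_apply,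
        Module.End.one_apply] using h2
    rw [Fin.sum_univ_succ]
    simp only [Bop, Module.End.mul_apply, Fin.val_zero, List.eraseIdx_cons_zero,
      Fin.val_succ, List.eraseIdx_cons_succ]
    rw [hco, hih]
    have hks := sub_eq_of_eq_add hsh
    rw [← hks]
    simp only [map_add, map_smul, map_sum, map_sub]
    push_cast
    module

end Main
/-- h_gl Ψ_M(μ) = −2(p+M) Ψ_M(μ) + 2ξ(p+M−1) ∑_i Ψ_{M−1}(μ^(i)),
    with p = −(1/2)∑_a ℓ_a. -/
theorem h_global_on_Bethe_vector
    {H : Type*} [AddCommGroup H] [Module ℂ H]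
    (N : ℕ) (z ℓ : Fin N → ℂ) (hz : Function.Injective z) (ξ : ℂ)
    (hA XpA XmA : Fin N → Module.End ℂ H)
    (hhh : ∀ a b, hA a * hA b = hA b * hA a)
    (hhXp : ∀ a b, hA a * XpA b - XpA b * hA a = if a = b then (2 : ℂ) • XpA a else 0)
    (hhXm : ∀ a b, hA a * XmA b - XmA b * hA a = if a = b then (-2 : ℂ) • XmA a else 0)
    (hXpXm : ∀ a b, XpA a * XmA b - XmA b * XpA a = if a = b then hA a else 0)
    (hXpXp : ∀ a b, XpA a * XpA b = XpA b * XpA a)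
    (hXmXm : ∀ a b, XmA a * XmA b = XmA b * XmA a)
    (Ω : H) (hΩp : ∀ a, XpA a Ω = 0) (hΩh : ∀ a, hA a Ω = ℓ a • Ω)
    (M : ℕ) (μ : Fin (M + 1) → ℂ) (hμ : Function.Injective μ)
    (hdisj : ∀ i a, μ i ≠ z a) :
    (∑ a, hA a) (Bop (XmGaudin z ξ XmA hA) ξ 0 (List.ofFn μ) Ω) =
      (-2 * ((-(1 / 2) * ∑ a, ℓ a) + ((M : ℂ) + 1))) •
          Bop (XmGaudin z ξ XmA hA) ξ 0 (List.ofFn μ) Ω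
        + (2 * ξ * ((-(1 / 2) * ∑ a, ℓ a) + (M : ℂ))) •
            ∑ i, Bop (XmGaudin z ξ XmA hA) ξ 0 (rmv μ i) Ω := by
  have hkey := key z ℓ ξ hA XmA hhXm Ω hΩh (List.ofFn μ) (M + 1) 0 (by simp)
  simp only [rmv_eq]
  rw [hkey]
  congr 1
  · congr 1
    push_cast
    ring
  · congr 1
    push_cast
    ring
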